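/- Let F be a field of characteristic not 2 or 3, and let g = gl(2,F) +_π F² be the semidirect product defined by the natural action of gl(2,F) on F². Then every cyclic metric B on g satisfies B(F², g) = 0. -/

import Mathlib

/-- Every cyclic metric B on the semidirect product g = gl(2,F) +_π F²
(natural action, F² an Abelian ideal) satisfies B(F², g) = 0.  The semidirect product
bracket is [(x,u),(y,v)] = ([x,y], x·v − y·u), where [x,y] = xy − yx in gl(2,F). -/
theorem cyclic_metric_gl2_semidirect_vanishes_on_radical
    {F : Type*} [Field F]
    (hchar2 : ringChar F ≠ 2) (hchar3 : ringChar F ≠ 3)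
    (B : (Matrix (Fin 2) (Fin 2) F × (Fin 2 → F)) →ₗ[F]
          (Matrix (Fin 2) (Fin 2) F × (Fin 2 → F)) →ₗ[F] F)
    (hsymm : ∀ a b : Matrix (Fin 2) (Fin 2) F × (Fin 2 → F), B a b = B b a)
    (hcyc : ∀ a b c : Matrix (Fin 2) (Fin 2) F × (Fin 2 → F),
      B (a.1 * b.1 - b.1 * a.1, a.1.mulVec b.2 - b.1.mulVec a.2) c +
      B (b.1 * c.1 - c.1 * b.1, b.1.mulVec c.2 - c.1.mulVec b.2) a +
      B (c.1 * a.1 - a.1 * c.1, c.1.mulVec a.2 - a.1.mulVec c.2) b = 0) :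
    ∀ (v : Fin 2 → F) (a : Matrix (Fin 2) (Fin 2) F × (Fin 2 → F)), B (0, v) a = 0 := by
  have two0 : (2 : F) ≠ 0 := Ring.two_ne_zero hchar2
  -- splitting B over pair subtraction in the first slot
  have hBsub : ∀ (p q : Matrix (Fin 2) (Fin 2) F) (s t : Fin 2 → F)
      (c : Matrix (Fin 2) (Fin 2) F × (Fin 2 → F)),
      B (p - q, s - t) c = B (p, s) c - B (q, t) c := by
    intro p q s t c
    have : ((p - q, s - t) : Matrix (Fin 2) (Fin 2) F × (Fin 2 → F)) = (p, s) - (q, t) := rfl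
    rw [this, map_sub, LinearMap.sub_apply]
  have hB0 : ∀ (c : Matrix (Fin 2) (Fin 2) F × (Fin 2 → F)),
      B ((0 : Matrix (Fin 2) (Fin 2) F), (0 : Fin 2 → F)) c = 0 := by
    intro c
    have : ((0, 0) : Matrix (Fin 2) (Fin 2) F × (Fin 2 → F)) = 0 := rfl
    rw [this, map_zero, LinearMap.zero_apply]
  have hBneg : ∀ (s : Fin 2 → F) (c : Matrix (Fin 2) (Fin 2) F × (Fin 2 → F)),
      B (0, -s) c = - B (0, s) c := by
    intro s c
    have : ((0, -s) : Matrix (Fin 2) (Fin 2) F × (Fin 2 → F)) = -(0, s) := by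
      simp [Prod.neg_mk]
    rw [this, map_neg, LinearMap.neg_apply]
  have hBsmul : ∀ (k : F) (s : Fin 2 → F) (c : Matrix (Fin 2) (Fin 2) F × (Fin 2 → F)),
      B (0, k • s) c = k * B (0, s) c := by
    intro k s c
    have : ((0, k • s) : Matrix (Fin 2) (Fin 2) F × (Fin 2 → F)) = k • (0, s) := by
      simp [Prod.smul_mk]
    rw [this, map_smul, LinearMap.smul_apply, smul_eq_mul]
  -- Lemma A : B(0,xu)(0,w) = B(0,xw)(0,u)
  have hA : ∀ (x : Matrix (Fin 2) (Fin 2) F) (u w : Fin 2 → F),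
      B (0, x.mulVec u) (0, w) = B (0, x.mulVec w) (0, u) := by
    intro x u w
    have h := hcyc (x, 0) (0, u) (0, w)
    simp only [hBsub, hB0, mul_zero, zero_mul, Matrix.zero_mulVec, Matrix.mulVec_zero,
      sub_self, sub_zero, zero_sub, hBneg] at h
    linear_combination h
  -- B vanishes on F² × F²
  have f0 : ∀ (v w : Fin 2 → F), B (0, v) (0, w) = 0 := by
    intro v w
    by_cases hw : w = 0
    · subst hw
      have : ((0, (0 : Fin 2 → F)) : Matrix (Fin 2) (Fin 2) F × (Fin 2 → F)) = 0 := rfl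
      rw [this, map_zero]
    · -- x i j = v i * φ j  with φ = ![w 1, -w 0], so x.mulVec w = 0
      set x : Matrix (Fin 2) (Fin 2) F := Matrix.of (fun i j => v i * ![w 1, -(w 0)] j) with hx
      have hxw : x.mulVec w = 0 := by
        funext i
        simp [hx, Matrix.mulVec, dotProduct, Fin.sum_univ_two]
        ring
      have hxu : ∀ u : Fin 2 → F, x.mulVec u = (dotProduct ![w 1, -(w 0)] u) • v := by
        intro u
        funext i
        simp [hx, Matrix.mulVec, dotProduct, Fin.sum_univ_two]
        ring
      have key : ∀ u : Fin 2 → F, (dotProduct ![w 1, -(w 0)] u) * B (0, v) (0, w) = 0 := by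
        intro u
        have := hA x u w
        rw [hxw, hxu u, hBsmul] at this
        simpa [hB0] using this
      rcases show w 0 ≠ 0 ∨ w 1 ≠ 0 by
          by_contra hc
          push_neg at hc
          exact hw (funext fun i => by fin_cases i <;> simp [hc.1, hc.2]) with h0 | h1
      · have := key ![0, 1]
        simp [dotProduct, Fin.sum_univ_two] at this
        rcases this with h | h
        · exact absurd h h0
        · exact h
      · have := key ![1, 0]
        simp [dotProduct, Fin.sum_univ_two] at this
        rcases this with h | h
        · exact absurd h h1
        · exact h
  -- Lemma B : relation mixing gl2 and F²
  have hR : ∀ (x y : Matrix (Fin 2) (Fin 2) F) (u : Fin 2 → F),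
      B (x * y - y * x, 0) (0, u) + B (0, y.mulVec u) (x, 0)
        - B (0, x.mulVec u) (y, 0) = 0 := by
    intro x y u
    have h := hcyc (x, 0) (y, 0) (0, u)
    simp only [hBsub, hB0, mul_zero, zero_mul, Matrix.zero_mulVec, Matrix.mulVec_zero,
      sub_self, sub_zero, zero_sub, hBneg] at h
    have h' : B (x * y - y * x, (0 : Fin 2 → F)) (0, u)
        = B (x * y, 0) (0, u) - B (y * x, 0) (0, u) := by
      have := hBsub (x * y) (y * x) 0 0 (0, u)
      simpa using this
    rw [h']
    linear_combination h - h'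
  -- g(x,u) := B (0,u) (x,0) equals h(xu) with h(t) = B (0,t) (1,0)
  have hI : ∀ (x : Matrix (Fin 2) (Fin 2) F) (u : Fin 2 → F),
      B (0, u) (x, 0) = B (0, x.mulVec u) (1, 0) := by
    intro x u
    have h := hR x 1 u
    simp only [mul_one, one_mul, sub_self, Matrix.one_mulVec] at h
    rw [hB0] at h
    linear_combination h
  -- h((xy)u) = h((yx)u)
  have hcomm : ∀ (x y : Matrix (Fin 2) (Fin 2) F) (u : Fin 2 → F),
      B (0, x.mulVec (y.mulVec u)) (1, 0) = B (0, y.mulVec (x.mulVec u)) (1, 0) := by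
    intro x y u
    have h := hR x y u
    rw [hsymm (x * y - y * x, 0) (0, u), hI (x * y - y * x) u, hI x (y.mulVec u),
      hI y (x.mulVec u), Matrix.sub_mulVec] at h
    have hs : B (0, (x * y).mulVec u - (y * x).mulVec u) (1, 0)
        = B (0, (x * y).mulVec u) (1, 0) - B (0, (y * x).mulVec u) (1, 0) := by
      have := hBsub 0 0 ((x * y).mulVec u) ((y * x).mulVec u) (1, 0)
      simpa using this
    rw [hs, ← Matrix.mulVec_mulVec, ← Matrix.mulVec_mulVec] at h
    have h2 : (2 : F) * B (0, x.mulVec (y.mulVec u)) (1, 0)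
        = 2 * B (0, y.mulVec (x.mulVec u)) (1, 0) := by linear_combination h
    exact mul_left_cancel₀ two0 h2
  -- h vanishes on basis vectors
  have E12 : Matrix (Fin 2) (Fin 2) F := !![0,1;0,0]
  have he : ∀ t : Fin 2 → F, B (0, t) (1, 0) = 0 := by
    have h0 := hcomm !![0,1;0,0] !![0,0;1,0] ![1, 0]
    have h1 := hcomm !![0,1;0,0] !![0,0;1,0] ![0, 1]
    have c1 : (!![0,0;1,0] : Matrix (Fin 2) (Fin 2) F).mulVec ![1, 0] = ![0, 1] := by
      funext i; fin_cases i <;>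
        simp [Matrix.mulVec, dotProduct, Fin.sum_univ_two]
    have c2 : (!![0,1;0,0] : Matrix (Fin 2) (Fin 2) F).mulVec ![0, 1] = ![1, 0] := by
      funext i; fin_cases i <;>
        simp [Matrix.mulVec, dotProduct, Fin.sum_univ_two]
    have c3 : (!![0,1;0,0] : Matrix (Fin 2) (Fin 2) F).mulVec ![1, 0] = 0 := by
      funext i; fin_cases i <;>
        simp [Matrix.mulVec, dotProduct, Fin.sum_univ_two]
    have c4 : (!![0,0;1,0] : Matrix (Fin 2) (Fin 2) F).mulVec ![0, 1] = 0 := by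
      funext i; fin_cases i <;>
        simp [Matrix.mulVec, dotProduct, Fin.sum_univ_two]
    rw [c1, c2, c3, Matrix.mulVec_zero, hB0] at h0
    rw [c4, c2, c1, Matrix.mulVec_zero, hB0] at h1
    -- h0 : B (0, ![1,0]) (1,0) = 0 ; h1 : 0 = B (0, ![0,1]) (1,0)
    intro t
    have ht : t = t 0 • ![1, 0] + t 1 • ![0, 1] := by
      funext i; fin_cases i <;> simp
    have hadd : B (0, t 0 • ![1, 0] + t 1 • ![0, 1]) ((1 : Matrix (Fin 2) (Fin 2) F), 0)
        = t 0 * B (0, ![1, 0]) (1, 0) + t 1 * B (0, ![0, 1]) (1, 0) := by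
      have : ((0, t 0 • ![1, 0] + t 1 • ![0, 1]) : Matrix (Fin 2) (Fin 2) F × (Fin 2 → F))
          = (0, t 0 • ![1, 0]) + (0, t 1 • ![0, 1]) := by
        simp [Prod.mk_add_mk]
      rw [this, map_add, LinearMap.add_apply, hBsmul, hBsmul]
    rw [ht, hadd, h0, ← h1]
    ring
  -- conclude
  intro v a
  obtain ⟨y, w⟩ := a
  have : ((y, w) : Matrix (Fin 2) (Fin 2) F × (Fin 2 → F)) = (y, 0) + (0, w) := by
    simp [Prod.mk_add_mk]
  rw [this, map_add, hI y v, he, f0]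
  ring
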